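/- Let G be a finite commutative group, H a subgroup, and G₁ = G/H. Let A ⊆ G be a standard set, A_H = A ∩ H (a standard set in H), and A₁ = A/H = {a + H : a ∈ A} (a standard set in G₁). Then λ(A) ≥ λ(A_H) · λ(A₁), λ⁺(A) ≥ λ⁺(A_H) · λ⁺(A₁), λ⁻(A) ≥ λ⁻(A_H) · λ⁻(A₁), and λ±(A) ≥ λ±(A_H) · λ⁻(A₁), where the quantities for A_H and A₁ are computed in the groups H and G₁ respectively. -/

import Mathlib

open scoped Pointwise ComplexOrder

noncomputable section

def IsStandard {G : Type*} [AddCommGroup G] (A : Set G) : Prop :=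
  A = -A ∧ (0 : G) ∈ A

def Delta {G : Type*} [AddCommGroup G] (A : Set G) : ℕ :=
  sSup {n | ∃ B : Finset G, ((B : Set G) - (B : Set G)) ∩ A = {0} ∧ B.card = n}

def DeltaBar {G : Type*} [AddCommGroup G] (A : Set G) : ℕ :=
  sSup {n | ∃ B : Finset G, ((B : Set G) - (B : Set G)) ⊆ A ∧ B.card = n}

def deltaL {G : Type*} [AddCommGroup G] [Fintype G] (A : Set G) : ℝ :=
  (Delta A : ℝ) / (Fintype.card G : ℝ)

def deltaU {G : Type*} [AddCommGroup G] (A : Set G) : ℝ :=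
  1 / (DeltaBar A : ℝ)

def ftrans {G : Type*} [AddCommGroup G] [Fintype G] (f : G → ℝ) (γ : AddChar G Circle) : ℂ :=
  ∑ x, (γ x : ℂ) * (f x : ℂ)

def PosFT {G : Type*} [AddCommGroup G] [Fintype G] (f : G → ℝ) : Prop :=
  ∀ γ : AddChar G Circle, 0 ≤ ftrans f γ

def lamSet {G : Type*} [AddCommGroup G] [Fintype G] (S : Set (G → ℝ)) : Set ℝ :=
  {r | ∃ f ∈ S, PosFT f ∧ (∑ x, f x) ≠ 0 ∧ r = f 0 / ∑ x, f x}

def lam {G : Type*} [AddCommGroup G] [Fintype G] (A : Set G) : ℝ :=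
  sInf (lamSet {f | f ≠ 0 ∧ ∀ x ∉ A, f x = 0})

def lamMinus {G : Type*} [AddCommGroup G] [Fintype G] (A : Set G) : ℝ :=
  sInf (lamSet {f | f ≠ 0 ∧ ∀ x ∉ A, f x ≤ 0})

def lamPlus {G : Type*} [AddCommGroup G] [Fintype G] (A : Set G) : ℝ :=
  sInf (lamSet {f | f ≠ 0 ∧ (∀ x ∉ A, f x = 0) ∧ ∀ x ∈ A, 0 ≤ f x})

def lamPM {G : Type*} [AddCommGroup G] [Fintype G] (A : Set G) : ℝ :=
  sInf (lamSet {f | f ≠ 0 ∧ (∀ x ∉ A, f x ≤ 0) ∧ ∀ x ∈ A, 0 ≤ f x})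

/-! ### Auxiliary lemmas -/

namespace Stmt15Aux

open Finset Complex

variable {G : Type*} [AddCommGroup G] [Fintype G]

local instance instFC : Fintype (AddChar G Circle) :=
  Fintype.ofEquiv (AddChar G ℂ) AddChar.circleEquivComplex.symm.toEquiv

lemma sum_circleChar [DecidableEq G] (t : G) :
    ∑ γ : AddChar G Circle, ((γ t : ℂ)) = if t = 0 then (Fintype.card G : ℂ) else 0 := by
  rw [← AddChar.sum_apply_eq_ite]
  exact Fintype.sum_equiv AddChar.circleEquivComplex.toEquiv _ _ (fun γ => rfl)

set_option linter.unusedSectionVars false in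
lemma circle_comb (γ : AddChar G Circle) (z x y : G) :
    ((γ (z - x + y) : ℂ)) = (γ z : ℂ) * (starRingEnd ℂ) (γ x : ℂ) * (γ y : ℂ) := by
  rw [show z - x + y = z + (-x) + y by abel, AddChar.map_add_eq_mul, AddChar.map_add_eq_mul,
    AddChar.map_neg_eq_inv, Circle.coe_mul, Circle.coe_mul, Circle.coe_inv_eq_conj]

lemma ftrans_one (f : G → ℝ) : ftrans f 1 = ((∑ x, f x : ℝ) : ℂ) := by
  simp [ftrans]

lemma sum_ftrans (f : G → ℝ) :
    ∑ γ : AddChar G Circle, ftrans f γ = (Fintype.card G : ℂ) * (f 0 : ℂ) := by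
  classical
  simp only [ftrans]
  rw [Finset.sum_comm]
  simp only [← Finset.sum_mul, sum_circleChar]
  simp

lemma sum_f_pos {f : G → ℝ} (hf : PosFT f) (hs : (∑ x, f x) ≠ 0) : 0 < ∑ x, f x := by
  have h := hf 1
  rw [ftrans_one] at h
  rw [Complex.zero_le_real] at h
  exact lt_of_le_of_ne h (Ne.symm hs)

lemma f0_pos {f : G → ℝ} (hf : PosFT f) (hs : (∑ x, f x) ≠ 0) : 0 < f 0 := by
  have key : ((∑ x, f x : ℝ) : ℂ) ≤ (Fintype.card G : ℂ) * (f 0 : ℂ) := by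
    rw [← sum_ftrans, ← ftrans_one]
    exact Finset.single_le_sum (f := fun γ => ftrans f γ) (fun γ _ => hf γ) (Finset.mem_univ 1)
  have : ((∑ x, f x : ℝ) : ℂ) ≤ ((Fintype.card G * f 0 : ℝ) : ℂ) := by
    rw [Complex.ofReal_mul]; exact_mod_cast key
  rw [Complex.real_le_real] at this
  have h1 := sum_f_pos hf hs
  have h2 : (0:ℝ) < (Fintype.card G : ℝ) * f 0 := lt_of_lt_of_le h1 this
  have hc : (0:ℝ) < (Fintype.card G : ℝ) := by exact_mod_cast Fintype.card_pos
  nlinarith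

lemma posdef {f : G → ℝ} (hf : PosFT f) (u : G → ℂ) :
    0 ≤ ∑ x, ∑ y, ((f (x - y) : ℂ) * (u x * (starRingEnd ℂ) (u y))) := by
  classical
  set N : ℂ := (Fintype.card G : ℂ) with hN
  set S : ℂ := ∑ x, ∑ y, ((f (x - y) : ℂ) * (u x * (starRingEnd ℂ) (u y))) with hS
  set v : AddChar G Circle → ℂ := fun γ => ∑ x, (starRingEnd ℂ) (γ x : ℂ) * u x with hv
  have key : ∑ γ : AddChar G Circle, ftrans f γ * (v γ * (starRingEnd ℂ) (v γ)) = N * S := by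
    have hconj : ∀ γ, (starRingEnd ℂ) (v γ) = ∑ y, (γ y : ℂ) * (starRingEnd ℂ) (u y) := by
      intro γ
      rw [hv, map_sum]
      exact Finset.sum_congr rfl (fun y _ => by simp)
    calc ∑ γ : AddChar G Circle, ftrans f γ * (v γ * (starRingEnd ℂ) (v γ))
        = ∑ γ : AddChar G Circle, ∑ z, ∑ x, ∑ y,
            ((γ (z - x + y) : ℂ)) * ((f z : ℂ) * (u x * (starRingEnd ℂ) (u y))) := by
          refine Finset.sum_congr rfl (fun γ _ => ?_)
          rw [hconj, ftrans, hv, Finset.sum_mul_sum]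
          rw [Finset.sum_mul]
          refine Finset.sum_congr rfl (fun z _ => ?_)
          rw [Finset.mul_sum]
          refine Finset.sum_congr rfl (fun x _ => ?_)
          rw [Finset.mul_sum]
          refine Finset.sum_congr rfl (fun y _ => ?_)
          rw [circle_comb]
          ring
      _ = ∑ z, ∑ x, ∑ y,
            (∑ γ : AddChar G Circle, ((γ (z - x + y) : ℂ))) *
              ((f z : ℂ) * (u x * (starRingEnd ℂ) (u y))) := by
          rw [Finset.sum_comm]
          refine Finset.sum_congr rfl (fun z _ => ?_)
          rw [Finset.sum_comm]
          refine Finset.sum_congr rfl (fun x _ => ?_)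
          rw [Finset.sum_comm]
          refine Finset.sum_congr rfl (fun y _ => ?_)
          rw [Finset.sum_mul]
      _ = ∑ z, ∑ x, ∑ y,
            (if z - x + y = 0 then N else 0) * ((f z : ℂ) * (u x * (starRingEnd ℂ) (u y))) := by
          simp only [sum_circleChar, hN]
      _ = ∑ x, ∑ y, ∑ z,
            (if z - x + y = 0 then N else 0) * ((f z : ℂ) * (u x * (starRingEnd ℂ) (u y))) := by
          rw [Finset.sum_comm]
          refine Finset.sum_congr rfl (fun x _ => Finset.sum_comm)
      _ = N * S := by
          rw [hS, Finset.mul_sum]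
          refine Finset.sum_congr rfl (fun x _ => ?_)
          rw [Finset.mul_sum]
          refine Finset.sum_congr rfl (fun y _ => ?_)
          rw [Finset.sum_eq_single (x - y)]
          · rw [if_pos (by abel)]
          · intro z _ hz
            rw [if_neg, zero_mul]
            intro h
            exact hz (by have h2 : z - (x - y) = z - x + y := by abel
                         exact sub_eq_zero.mp (h2.trans h) )
          · intro h; exact absurd (Finset.mem_univ _) h
  have hpos : 0 ≤ N * S := by
    rw [← key]
    refine Finset.sum_nonneg (fun γ _ => mul_nonneg (hf γ) ?_)
    rw [Complex.mul_conj]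
    exact_mod_cast Complex.normSq_nonneg (v γ)
  have hNr : N = ((Fintype.card G : ℝ) : ℂ) := by rw [hN]; norm_cast
  have hNinv : (0:ℂ) ≤ N⁻¹ := by
    rw [hNr, ← Complex.ofReal_inv, Complex.zero_le_real]
    positivity
  have : S = N⁻¹ * (N * S) := by
    rw [← mul_assoc, inv_mul_cancel₀, one_mul]
    rw [hN]
    exact Nat.cast_ne_zero.mpr Fintype.card_ne_zero
  rw [this]
  exact mul_nonneg hNinv hpos

lemma nonneg_of_card_mul {n : ℕ} (hn : n ≠ 0) {z : ℂ} (h : 0 ≤ (n:ℂ) * z) : 0 ≤ z := by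
  have h1 : z = ((n:ℂ))⁻¹ * ((n:ℂ) * z) := by
    rw [← mul_assoc, inv_mul_cancel₀ (Nat.cast_ne_zero.mpr hn), one_mul]
  have h2 : (0:ℂ) ≤ ((n:ℂ))⁻¹ := by
    have : ((n:ℂ))⁻¹ = (((n:ℝ))⁻¹ : ℂ) := by push_cast; ring
    rw [this, ← Complex.ofReal_inv, Complex.zero_le_real]
    positivity
  rw [h1]
  exact mul_nonneg h2 h

lemma sum_eq_sum_subgroup (H : AddSubgroup G) [Fintype H] (c : G → ℂ)
    (hc : ∀ x ∉ H, c x = 0) : ∑ x : G, c x = ∑ h : H, c ↑h := by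
  classical
  rw [← Finset.sum_filter_of_ne (p := (· ∈ H)) (fun x _ hx => by
    by_contra hmem; exact hx (hc x hmem))]
  exact Finset.sum_subtype _ (by simp) c

lemma posft_restrict (H : AddSubgroup G) [Fintype H] {f : G → ℝ} (hf : PosFT f) :
    PosFT (fun h : H => f ↑h) := by
  classical
  intro χ
  set u : G → ℂ := fun x => if hx : x ∈ H then (χ ⟨x, hx⟩ : ℂ) else 0 with hu
  have hS := posdef hf u
  have huz : ∀ x ∉ H,
      (fun x => ∑ y, ((f (x - y) : ℂ) * (u x * (starRingEnd ℂ) (u y)))) x = 0 := by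
    intro x hx
    simp only [hu, dif_neg hx]
    simp
  rw [sum_eq_sum_subgroup H _ huz] at hS
  have huz2 : ∀ (h : H) (y : G), y ∉ H →
      (f ((h:G) - y) : ℂ) * (u ↑h * (starRingEnd ℂ) (u y)) = 0 := by
    intro h y hy
    simp only [hu, dif_neg hy]
    simp
  have hS2 : ∑ h : H, ∑ k : H, ((f ((h:G) - (k:G)) : ℂ) * (u ↑h * (starRingEnd ℂ) (u ↑k)))
      = ∑ h : H, ∑ y : G, ((f ((h:G) - y) : ℂ) * (u ↑h * (starRingEnd ℂ) (u y))) := by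
    refine Finset.sum_congr rfl (fun h _ => ?_)
    exact (sum_eq_sum_subgroup H _ (huz2 h)).symm
  rw [← hS2] at hS
  have key : ∑ h : H, ∑ k : H, ((f ((h:G) - (k:G)) : ℂ) * (u ↑h * (starRingEnd ℂ) (u ↑k)))
      = (Fintype.card H : ℂ) * ftrans (fun h : H => f ↑h) χ := by
    have step : ∀ h k : H, (f ((h:G) - (k:G)) : ℂ) * (u ↑h * (starRingEnd ℂ) (u ↑k))
        = (χ (h - k) : ℂ) * (f ((h - k : H) : G) : ℂ) := by
      intro h k
      simp only [hu, dif_pos (SetLike.coe_mem h), dif_pos (SetLike.coe_mem k)]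
      rw [show (⟨(h:G), SetLike.coe_mem h⟩ : H) = h from rfl,
          show (⟨(k:G), SetLike.coe_mem k⟩ : H) = k from rfl]
      rw [← Circle.coe_inv_eq_conj, ← AddChar.map_neg_eq_inv, ← Circle.coe_mul,
          ← AddChar.map_add_eq_mul, ← sub_eq_add_neg]
      rw [show ((h:G) - (k:G)) = ((h - k : H) : G) from rfl]
      ring
    simp only [step]
    rw [Finset.sum_comm]
    have inner : ∀ k : H, ∑ h : H, (χ (h - k) : ℂ) * (f ((h - k : H) : G) : ℂ)
        = ftrans (fun h : H => f ↑h) χ := by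
      intro k
      rw [ftrans]
      exact Fintype.sum_equiv (Equiv.subRight k) _ _ (fun h => rfl)
    simp only [inner]
    rw [Finset.sum_const, card_univ, nsmul_eq_mul]
  rw [key] at hS
  exact nonneg_of_card_mul Fintype.card_ne_zero hS

open Classical in
def Fquot (H : AddSubgroup G) (f : G → ℝ) : G ⧸ H → ℝ :=
  fun c => ∑ x : G, if (x : G ⧸ H) = c then f x else 0

lemma posft_quot (H : AddSubgroup G) [Fintype (G ⧸ H)] {f : G → ℝ} (hf : PosFT f) :
    PosFT (Fquot H f) := by
  classical
  intro η
  have key : ftrans (Fquot H f) η = ftrans f (η.compAddMonoidHom (QuotientAddGroup.mk' H)) := by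
    rw [ftrans, ftrans]
    simp only [Fquot]
    push_cast
    simp only [Finset.mul_sum]
    rw [Finset.sum_comm]
    refine Finset.sum_congr rfl (fun x _ => ?_)
    simp only [apply_ite (fun r : ℝ => (r : ℂ)), Complex.ofReal_zero, mul_ite, mul_zero]
    rw [Finset.sum_ite_eq Finset.univ ((x : G ⧸ H) : G ⧸ H) (fun c => (η c : ℂ) * (f x : ℂ))]
    simp
  rw [key]
  exact hf _

lemma Fquot_zero (H : AddSubgroup G) [Fintype H] (f : G → ℝ) :
    Fquot H f 0 = ∑ h : H, f ↑h := by
  classical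
  have h1 : Fquot H f 0 = ∑ x : G, (if x ∈ H then f x else 0) := by
    rw [Fquot]
    refine Finset.sum_congr rfl (fun x _ => ?_)
    congr 1
    simp [QuotientAddGroup.eq_zero_iff]
  rw [h1]
  have h2 : (∑ x : G, ((if x ∈ H then f x else 0) : ℝ))
      = ∑ h : H, (if (h:G) ∈ H then f ↑h else 0) := by
    have := sum_eq_sum_subgroup H (c := fun x => ((if x ∈ H then f x else 0 : ℝ) : ℂ))
      (fun x hx => by simp [if_neg hx])
    exact_mod_cast this
  rw [h2]
  exact Finset.sum_congr rfl (fun h _ => by rw [if_pos (SetLike.coe_mem h)])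

lemma sum_Fquot (H : AddSubgroup G) [Fintype (G ⧸ H)] (f : G → ℝ) :
    ∑ c, Fquot H f c = ∑ x, f x := by
  classical
  rw [show (∑ c, Fquot H f c) = ∑ c : G ⧸ H, ∑ x : G, if (x : G ⧸ H) = c then f x else 0 from rfl]
  rw [Finset.sum_comm]
  simp

lemma lamSet_pos {S : Set (G → ℝ)} {r : ℝ} (hr : r ∈ lamSet S) : 0 < r := by
  obtain ⟨f, _, hP, hs, rfl⟩ := hr
  exact div_pos (f0_pos hP hs) (sum_f_pos hP hs)

lemma lamSet_bddBelow (S : Set (G → ℝ)) : BddBelow (lamSet S) :=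
  ⟨0, fun r hr => (lamSet_pos hr).le⟩

lemma sInf_lamSet_nonneg (S : Set (G → ℝ)) : 0 ≤ sInf (lamSet S) :=
  Real.sInf_nonneg (fun r hr => (lamSet_pos hr).le)

lemma key_ineq (H : AddSubgroup G) [Fintype H] [Fintype (G ⧸ H)]
    (SA : Set (G → ℝ)) (SH : Set (H → ℝ)) (SQ : Set ((G ⧸ H) → ℝ))
    (hne : (lamSet SA).Nonempty)
    (hcond : ∀ f ∈ SA, PosFT f → (∑ x, f x) ≠ 0 → (fun h : H => f ↑h) ≠ 0 → Fquot H f ≠ 0 →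
        ((fun h : H => f ↑h) ∈ SH ∧ Fquot H f ∈ SQ)) :
    sInf (lamSet SH) * sInf (lamSet SQ) ≤ sInf (lamSet SA) := by
  refine le_csInf hne ?_
  rintro r ⟨f, hfS, hfP, hfs, rfl⟩
  have hf0 : 0 < f 0 := f0_pos hfP hfs
  have hfsum : 0 < ∑ x, f x := sum_f_pos hfP hfs
  have hPF : PosFT (Fquot H f) := posft_quot H hfP
  have hsF : (∑ c, Fquot H f c) ≠ 0 := by rw [sum_Fquot]; exact hfs
  have hF0 : 0 < Fquot H f 0 := f0_pos hPF hsF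
  have hg0 : f ((0:H):G) = f 0 := by rw [ZeroMemClass.coe_zero]
  have hgne : (fun h : H => f ↑h) ≠ 0 := by
    intro hz
    have h2 : f ((0:H):G) = 0 := congrFun hz 0
    rw [hg0] at h2
    exact hf0.ne' h2
  have hFne : Fquot H f ≠ 0 := by
    intro hz
    have := congrFun hz 0
    exact hF0.ne' this
  obtain ⟨hSHmem, hSQmem⟩ := hcond f hfS hfP hfs hgne hFne
  have hgsum : (∑ h : H, (fun h : H => f ↑h) h) = Fquot H f 0 := (Fquot_zero H f).symm
  have hH : sInf (lamSet SH) ≤ f 0 / Fquot H f 0 := by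
    refine csInf_le (lamSet_bddBelow _) ?_
    exact ⟨_, hSHmem, posft_restrict H hfP, by rw [hgsum]; exact hF0.ne', by show _ = f ((0:H):G) / _; rw [hgsum, hg0]⟩
  have hQ : sInf (lamSet SQ) ≤ Fquot H f 0 / ∑ x, f x := by
    refine csInf_le (lamSet_bddBelow _) ?_
    exact ⟨_, hSQmem, hPF, hsF, by rw [sum_Fquot]⟩
  have hmul : sInf (lamSet SH) * sInf (lamSet SQ)
      ≤ (f 0 / Fquot H f 0) * (Fquot H f 0 / ∑ x, f x) := by
    refine mul_le_mul hH hQ (sInf_lamSet_nonneg _) ?_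
    positivity
  calc sInf (lamSet SH) * sInf (lamSet SQ)
      ≤ (f 0 / Fquot H f 0) * (Fquot H f 0 / ∑ x, f x) := hmul
    _ = f 0 / ∑ x, f x := by
        field_simp

lemma delta_mem (A : Set G) (h0 : (0:G) ∈ A) :
    ∃ r, r ∈ lamSet {f : G → ℝ | f ≠ 0 ∧ (∀ x ∉ A, f x = 0) ∧ (∀ x ∉ A, f x ≤ 0)
        ∧ ∀ x, 0 ≤ f x} := by
  classical
  set d : G → ℝ := fun x => if x = 0 then 1 else 0 with hd
  have hsum : ∑ x, d x = 1 := by simp [hd]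
  have hP : PosFT d := by
    intro γ
    have : ftrans d γ = 1 := by
      rw [ftrans]
      simp only [hd, apply_ite (fun r : ℝ => (r : ℂ)), Complex.ofReal_one, Complex.ofReal_zero,
        mul_ite, mul_one, mul_zero]
      rw [Finset.sum_ite_eq' Finset.univ (0:G) (fun x => (γ x : ℂ))]
      simp
    rw [this]
    exact zero_le_one
  refine ⟨d 0 / ∑ x, d x, d, ⟨?_, ?_, ?_, ?_⟩, hP, by rw [hsum]; norm_num, rfl⟩
  · intro hz
    have := congrFun hz 0
    simp [hd] at this
  · intro x hx
    have : x ≠ 0 := fun h => hx (h ▸ h0)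
    simp [hd, this]
  · intro x hx
    have : x ≠ 0 := fun h => hx (h ▸ h0)
    simp [hd, this]
  · intro x
    by_cases h : x = 0 <;> simp [hd, h]

end Stmt15Aux

open Stmt15Aux

theorem stmt15 {G : Type*} [AddCommGroup G] [Fintype G]
    (H : AddSubgroup G) [Fintype H] [Fintype (G ⧸ H)]
    (A : Set G) (hA : IsStandard A)
    (AH : Set H) (hAH : AH = Subtype.val ⁻¹' A)
    (A₁ : Set (G ⧸ H)) (hA₁ : A₁ = (QuotientAddGroup.mk : G → G ⧸ H) '' A) :
    lam AH * lam A₁ ≤ lam A ∧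
    lamPlus AH * lamPlus A₁ ≤ lamPlus A ∧
    lamMinus AH * lamMinus A₁ ≤ lamMinus A ∧
    lamPM AH * lamMinus A₁ ≤ lamPM A := by
  classical
  obtain ⟨-, h0A⟩ := hA
  obtain ⟨r, hr⟩ := delta_mem A h0A
  obtain ⟨d, ⟨hd1, hd2, hd3, hd4⟩, hdP, hds, hdr⟩ := hr
  -- membership of d in each of the four classes for A
  have hmemA : (lamSet {f : G → ℝ | f ≠ 0 ∧ ∀ x ∉ A, f x = 0}).Nonempty :=
    ⟨r, d, ⟨hd1, hd2⟩, hdP, hds, hdr⟩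
  have hmemAp : (lamSet {f : G → ℝ | f ≠ 0 ∧ (∀ x ∉ A, f x = 0) ∧ ∀ x ∈ A, 0 ≤ f x}).Nonempty :=
    ⟨r, d, ⟨hd1, hd2, fun x _ => hd4 x⟩, hdP, hds, hdr⟩
  have hmemAm : (lamSet {f : G → ℝ | f ≠ 0 ∧ ∀ x ∉ A, f x ≤ 0}).Nonempty :=
    ⟨r, d, ⟨hd1, hd3⟩, hdP, hds, hdr⟩
  have hmemApm : (lamSet {f : G → ℝ | f ≠ 0 ∧ (∀ x ∉ A, f x ≤ 0) ∧ ∀ x ∈ A, 0 ≤ f x}).Nonempty :=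
    ⟨r, d, ⟨hd1, hd3, fun x _ => hd4 x⟩, hdP, hds, hdr⟩
  -- helper facts about memberships
  have hAHmem : ∀ h : H, h ∈ AH ↔ (h : G) ∈ A := by
    intro h; rw [hAH]; rfl
  have hA₁not : ∀ (x : G), ((x : G ⧸ H) ∉ A₁) → x ∉ A := by
    intro x hx hxa
    exact hx (hA₁ ▸ ⟨x, hxa, rfl⟩)
  refine ⟨?_, ?_, ?_, ?_⟩
  · -- lam
    refine key_ineq H _ _ _ hmemA ?_
    rintro f ⟨-, hf0⟩ _ _ hgne hFne
    refine ⟨⟨hgne, fun h hh => hf0 _ ((hAHmem h).not.mp hh)⟩, ⟨hFne, ?_⟩⟩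
    intro c hc
    induction c using QuotientAddGroup.induction_on with
    | H z =>
      rw [Fquot]
      refine Finset.sum_eq_zero (fun x _ => ?_)
      by_cases hxc : (x : G ⧸ H) = (z : G ⧸ H)
      · rw [if_pos hxc, hf0 _ (hA₁not x (hxc ▸ hc))]
      · rw [if_neg hxc]
  · -- lamPlus
    refine key_ineq H _ _ _ hmemAp ?_
    rintro f ⟨-, hf0, hfpos⟩ _ _ hgne hFne
    have hfnn : ∀ x, 0 ≤ f x := by
      intro x
      by_cases hx : x ∈ A
      · exact hfpos x hx
      · rw [hf0 x hx]
    refine ⟨⟨hgne, fun h hh => hf0 _ ((hAHmem h).not.mp hh), fun h _ => hfnn _⟩,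
      ⟨hFne, ?_, ?_⟩⟩
    · intro c hc
      induction c using QuotientAddGroup.induction_on with
      | H z =>
        rw [Fquot]
        refine Finset.sum_eq_zero (fun x _ => ?_)
        by_cases hxc : (x : G ⧸ H) = (z : G ⧸ H)
        · rw [if_pos hxc, hf0 _ (hA₁not x (hxc ▸ hc))]
        · rw [if_neg hxc]
    · intro c _
      rw [Fquot]
      refine Finset.sum_nonneg (fun x _ => ?_)
      by_cases hxc : (x : G ⧸ H) = c
      · rw [if_pos hxc]; exact hfnn x
      · rw [if_neg hxc]
  · -- lamMinus
    refine key_ineq H _ _ _ hmemAm ?_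
    rintro f ⟨-, hf0⟩ _ _ hgne hFne
    refine ⟨⟨hgne, fun h hh => hf0 _ ((hAHmem h).not.mp hh)⟩, ⟨hFne, ?_⟩⟩
    intro c hc
    induction c using QuotientAddGroup.induction_on with
    | H z =>
      rw [Fquot]
      refine Finset.sum_nonpos (fun x _ => ?_)
      by_cases hxc : (x : G ⧸ H) = (z : G ⧸ H)
      · rw [if_pos hxc]; exact hf0 _ (hA₁not x (hxc ▸ hc))
      · rw [if_neg hxc]
  · -- lamPM
    refine key_ineq H _ _ _ hmemApm ?_
    rintro f ⟨-, hf0, hfpos⟩ _ _ hgne hFne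
    refine ⟨⟨hgne, fun h hh => hf0 _ ((hAHmem h).not.mp hh),
      fun h hh => hfpos _ ((hAHmem h).mp hh)⟩, ⟨hFne, ?_⟩⟩
    intro c hc
    induction c using QuotientAddGroup.induction_on with
    | H z =>
      rw [Fquot]
      refine Finset.sum_nonpos (fun x _ => ?_)
      by_cases hxc : (x : G ⧸ H) = (z : G ⧸ H)
      · rw [if_pos hxc]; exact hf0 _ (hA₁not x (hxc ▸ hc))
      · rw [if_neg hxc]
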